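/- For every y, t > 0 and z ≥ 0, the integral ∫₀ᵗ (y·exp(−y²/(2u))/√(2πu³)) · (exp(−z²/(2(t−u)))/√(2π(t−u))) du equals exp(−(y+z)²/(2t))/√(2πt). -/

import Mathlib

set_option maxHeartbeats 1000000
open Real Filter MeasureTheory Set intervalIntegral Topology

noncomputable def myErf (x : ℝ) : ℝ := ∫ s in (0:ℝ)..x, Real.exp (-s^2/2)

lemma gauss_eq : (fun s : ℝ => Real.exp (-s^2/2)) = fun s => Real.exp (-(1/2) * s^2) := by
  funext s; ring_nf

lemma gauss_integrable : Integrable (fun s : ℝ => Real.exp (-s^2/2)) := by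
  rw [gauss_eq]; exact integrable_exp_neg_mul_sq (by norm_num)

lemma myErf_hasDerivAt (x : ℝ) : HasDerivAt myErf (Real.exp (-x^2/2)) x := by
  refine intervalIntegral.integral_hasDerivAt_right
    gauss_integrable.intervalIntegrable
    (Continuous.stronglyMeasurableAtFilter (by continuity) _ _) (by fun_prop)

lemma gauss_Ioi : ∫ s in Ioi (0:ℝ), Real.exp (-s^2/2) = Real.sqrt (2*π) / 2 := by
  rw [gauss_eq, integral_gaussian_Ioi]
  rw [show π/(1/2:ℝ) = 2*π by ring]

lemma gauss_Iic : ∫ s in Iic (0:ℝ), Real.exp (-s^2/2) = Real.sqrt (2*π) / 2 := by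
  have htot : ∫ s : ℝ, Real.exp (-s^2/2) = Real.sqrt (2*π) := by
    rw [gauss_eq, integral_gaussian]
    rw [show π/(1/2:ℝ) = 2*π by ring]
  have := integral_Iic_add_Ioi (b := (0:ℝ))
    gauss_integrable.integrableOn gauss_integrable.integrableOn
  rw [gauss_Ioi, htot] at this
  linarith

lemma myErf_atTop : Tendsto myErf atTop (𝓝 (Real.sqrt (2*π)/2)) := by
  rw [← gauss_Ioi]
  exact intervalIntegral_tendsto_integral_Ioi 0 gauss_integrable.integrableOn tendsto_id

lemma myErf_atBot : Tendsto myErf atBot (𝓝 (-(Real.sqrt (2*π)/2))) := by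
  have h : Tendsto (fun x : ℝ => ∫ s in x..(0:ℝ), Real.exp (-s^2/2)) atBot
      (𝓝 (Real.sqrt (2*π)/2)) := by
    rw [← gauss_Iic]
    exact intervalIntegral_tendsto_integral_Iic 0 gauss_integrable.integrableOn tendsto_id
  have heq : myErf = fun x => -∫ s in x..(0:ℝ), Real.exp (-s^2/2) := by
    funext x; rw [myErf, intervalIntegral.integral_symm]
  rw [heq]
  exact h.neg

lemma hasDerivAt_arg (y w t u : ℝ) (hu : 0 < u) (hut : u < t) :
    HasDerivAt (fun v => (w * Real.sqrt v / Real.sqrt (t - v)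
        - y * Real.sqrt (t - v) / Real.sqrt v) / Real.sqrt t)
      ((w * (Real.sqrt u ^ 2 + Real.sqrt (t - u) ^ 2)
          / (2 * Real.sqrt u * Real.sqrt (t - u) ^ 3)
        + y * (Real.sqrt u ^ 2 + Real.sqrt (t - u) ^ 2)
          / (2 * Real.sqrt (t - u) * Real.sqrt u ^ 3)) / Real.sqrt t) u := by
  have hs0 : (0:ℝ) < Real.sqrt u := Real.sqrt_pos.2 hu
  have hr0 : (0:ℝ) < Real.sqrt (t - u) := Real.sqrt_pos.2 (by linarith)
  have hs : HasDerivAt (fun v => Real.sqrt v) (1 / (2 * Real.sqrt u)) u :=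
    Real.hasDerivAt_sqrt hu.ne'
  have hr : HasDerivAt (fun v => Real.sqrt (t - v)) (-(1 / (2 * Real.sqrt (t - u)))) u := by
    have h1 : HasDerivAt (fun v : ℝ => t - v) (-1) u := by
      exact (hasDerivAt_id' u).const_sub t
    have := (Real.hasDerivAt_sqrt (show t - u ≠ 0 by linarith)).comp u h1
    simpa [Function.comp_def] using this
  have h1 : HasDerivAt (fun v => w * Real.sqrt v / Real.sqrt (t - v))
      (((w * (1 / (2 * Real.sqrt u))) * Real.sqrt (t - u)
        - (w * Real.sqrt u) * (-(1 / (2 * Real.sqrt (t - u))))) / Real.sqrt (t - u) ^ 2) u :=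
    (hs.const_mul w).div hr hr0.ne'
  have h2 : HasDerivAt (fun v => y * Real.sqrt (t - v) / Real.sqrt v)
      (((y * (-(1 / (2 * Real.sqrt (t - u))))) * Real.sqrt u
        - (y * Real.sqrt (t - u)) * (1 / (2 * Real.sqrt u))) / Real.sqrt u ^ 2) u :=
    (hr.const_mul y).div hs hs0.ne'
  have := (h1.sub h2).div_const (Real.sqrt t)
  refine HasDerivAt.congr_deriv this ?_
  have e1 : Real.sqrt u ≠ 0 := hs0.ne'
  have e2 : Real.sqrt (t - u) ≠ 0 := hr0.ne'
  congr 1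
  set s := Real.sqrt u with hsdef
  set r := Real.sqrt (t - u) with hrdef
  field_simp
  ring

lemma exparg (s r y w t : ℝ) (hs : 0 < s) (hr : 0 < r) (ht : s^2 + r^2 = t) :
    -((y+w)^2)/(2*t) + -((w*s/r - y*r/s)^2/t)/2 = -(y^2)/(2*s^2) + -(w^2)/(2*r^2) := by
  subst ht
  have h1 : (0:ℝ) < s^2 + r^2 := by positivity
  field_simp
  ring

lemma sq_div_four_le_exp {x : ℝ} (hx : 0 ≤ x) : x^2/4 ≤ Real.exp x := by
  have h := Real.add_one_le_exp (x/2)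
  have h3 : x/2 ≤ Real.exp (x/2) := by linarith
  calc x^2/4 = (x/2)^2 := by ring
    _ ≤ Real.exp (x/2)^2 := by gcongr <;> positivity
    _ = Real.exp x := by rw [sq, ← Real.exp_add]; ring_nf

lemma myErf_continuous : Continuous myErf :=
  continuous_iff_continuousAt.2 fun x => (myErf_hasDerivAt x).continuousAt

/-- Convolution of the Lévy first-passage density with the Gaussian density. -/
theorem levy_gaussian_convolution (y z t : ℝ) (hy : 0 < y) (hz : 0 ≤ z) (ht : 0 < t) :
    ∫ u in (0:ℝ)..t,
      (y * Real.exp (-(y ^ 2) / (2 * u)) / Real.sqrt (2 * π * u ^ 3)) *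
        (Real.exp (-(z ^ 2) / (2 * (t - u))) / Real.sqrt (2 * π * (t - u))) =
      Real.exp (-((y + z) ^ 2) / (2 * t)) / Real.sqrt (2 * π * t) := by
  have h2π : (0:ℝ) < 2 * π := by positivity
  have hqt : (0:ℝ) < Real.sqrt t := Real.sqrt_pos.2 ht
  set f' : ℝ → ℝ := fun u =>
    (y * Real.exp (-(y ^ 2) / (2 * u)) / Real.sqrt (2 * π * u ^ 3)) *
      (Real.exp (-(z ^ 2) / (2 * (t - u))) / Real.sqrt (2 * π * (t - u))) with hf'def
  set arg : ℝ → ℝ → ℝ := fun w v =>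
    (w * Real.sqrt v / Real.sqrt (t - v) - y * Real.sqrt (t - v) / Real.sqrt v) / Real.sqrt t
    with hargdef
  set P : ℝ → ℝ := fun w => Real.exp (-((y + w) ^ 2) / (2 * t)) / (2 * π * Real.sqrt t)
    with hPdef
  set H : ℝ → ℝ := fun v => P z * myErf (arg z v) + P (-z) * myErf (arg (-z) v) with hHdef
  -- derivative
  have hderiv : ∀ u ∈ Ioo (0:ℝ) t, HasDerivAt H (f' u) u := by
    intro u hu
    obtain ⟨hu0, hut⟩ := hu
    have hs0 : (0:ℝ) < Real.sqrt u := Real.sqrt_pos.2 hu0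
    have hr0 : (0:ℝ) < Real.sqrt (t - u) := Real.sqrt_pos.2 (by linarith)
    have hsq : Real.sqrt u ^ 2 = u := Real.sq_sqrt hu0.le
    have hrq : Real.sqrt (t - u) ^ 2 = t - u := Real.sq_sqrt (by linarith)
    have hst : Real.sqrt u ^ 2 + Real.sqrt (t - u) ^ 2 = t := by rw [hsq, hrq]; ring
    have hq2 : Real.sqrt t ^ 2 = t := Real.sq_sqrt ht.le
    set s := Real.sqrt u with hsdef
    set r := Real.sqrt (t - u) with hrdef
    -- the derivative value of arg w
    set D : ℝ → ℝ := fun w => (w * (s ^ 2 + r ^ 2) / (2 * s * r ^ 3)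
        + y * (s ^ 2 + r ^ 2) / (2 * r * s ^ 3)) / Real.sqrt t with hDdef
    have d1 : ∀ w, HasDerivAt (fun v => myErf (arg w v))
        (Real.exp (-(arg w u) ^ 2 / 2) * D w) u := by
      intro w
      rw [hargdef]
      exact HasDerivAt.comp u (myErf_hasDerivAt _) (hasDerivAt_arg y w t u hu0 hut)
    have dH : HasDerivAt H
        (P z * (Real.exp (-(arg z u) ^ 2 / 2) * D z)
          + P (-z) * (Real.exp (-(arg (-z) u) ^ 2 / 2) * D (-z))) u := by
      rw [hHdef]
      exact ((d1 z).const_mul (P z)).add ((d1 (-z)).const_mul (P (-z)))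
    convert dH using 1
    -- key exponential identity
    have key1 : ∀ w, P w * Real.exp (-(arg w u) ^ 2 / 2)
        = Real.exp (-(y ^ 2) / (2 * u)) * Real.exp (-(w ^ 2) / (2 * (t - u))) / (2 * π * Real.sqrt t) := by
      intro w
      have hargsq : (arg w u) ^ 2 = (w * s / r - y * r / s) ^ 2 / t := by
        rw [hargdef]
        simp only
        rw [div_pow, hq2]
      rw [hPdef]
      simp only
      rw [hargsq, div_mul_eq_mul_div, ← Real.exp_add]
      rw [show -(y + w) ^ 2 / (2 * t) + -((w * s / r - y * r / s) ^ 2 / t) / 2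
          = -((y+w)^2)/(2*t) + -((w*s/r - y*r/s)^2/t)/2 by ring]
      rw [exparg s r y w t hs0 hr0 hst]
      rw [Real.exp_add, hsq, hrq]
    have hD : D z + D (-z) = y * Real.sqrt t / (r * s ^ 3) := by
      rw [hDdef]
      simp only
      rw [hst]
      field_simp
      ring_nf
      rw [hq2]
      ring
    have hsqrt1 : Real.sqrt (2 * π * u ^ 3) = Real.sqrt (2 * π) * s ^ 3 := by
      rw [Real.sqrt_mul h2π.le]
      congr 1
      rw [show u ^ 3 = (s ^ 3) ^ 2 by rw [← hsq]; ring]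
      exact Real.sqrt_sq (by positivity)
    have hsqrt2 : Real.sqrt (2 * π * (t - u)) = Real.sqrt (2 * π) * r := by
      rw [Real.sqrt_mul h2π.le]
    have hA : Real.sqrt (2 * π) * Real.sqrt (2 * π) = 2 * π := Real.mul_self_sqrt h2π.le
    calc f' u = y * Real.exp (-(y ^ 2) / (2 * u)) / (Real.sqrt (2*π) * s ^ 3) *
          (Real.exp (-(z ^ 2) / (2 * (t - u))) / (Real.sqrt (2*π) * r)) := by
          rw [hf'def]; simp only; rw [hsqrt1, hsqrt2]
      _ = (P z * Real.exp (-(arg z u) ^ 2 / 2)) * D z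
          + (P (-z) * Real.exp (-(arg (-z) u) ^ 2 / 2)) * D (-z) := by
          rw [key1 z, key1 (-z)]
          rw [show ((-z : ℝ)) ^ 2 = z ^ 2 by ring]
          rw [show (Real.exp (-(y ^ 2) / (2 * u)) * Real.exp (-(z ^ 2) / (2 * (t - u))) / (2 * π * Real.sqrt t)) * D z
              + (Real.exp (-(y ^ 2) / (2 * u)) * Real.exp (-(z ^ 2) / (2 * (t - u))) / (2 * π * Real.sqrt t)) * D (-z)
              = (Real.exp (-(y ^ 2) / (2 * u)) * Real.exp (-(z ^ 2) / (2 * (t - u))) / (2 * π * Real.sqrt t)) * (D z + D (-z)) by ring]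
          rw [hD, ← hA]
          field_simp
          try ring
          rw [Real.sqrt_sq (by positivity)]
      _ = P z * (Real.exp (-(arg z u) ^ 2 / 2) * D z)
          + P (-z) * (Real.exp (-(arg (-z) u) ^ 2 / 2) * D (-z)) := by ring
  -- integrability
  have hint : IntervalIntegrable f' volume 0 t := by
    set M : ℝ := 16 * Real.sqrt t / (y ^ 3 * (2 * π)) with hMdef
    have hM : 0 ≤ M := by positivity
    set B : ℝ → ℝ := fun u => M * (Real.sqrt (t - u))⁻¹ with hBdef
    have hBint : IntervalIntegrable B volume 0 t := by
      have h1 : IntervalIntegrable (fun x : ℝ => x ^ (-(1/2) : ℝ)) volume 0 t :=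
        intervalIntegral.intervalIntegrable_rpow' (by norm_num)
      have h2 : IntervalIntegrable (fun x : ℝ => (t - x) ^ (-(1/2) : ℝ)) volume 0 t := by
        have := (h1.comp_sub_left t).symm
        simpa using this
      have h3 : IntervalIntegrable (fun x : ℝ => M * (t - x) ^ (-(1/2) : ℝ)) volume 0 t :=
        h2.const_mul M
      apply h3.congr
      intro x hx
      rw [uIoc_of_le ht.le] at hx
      have hx' : 0 ≤ t - x := by linarith [hx.2]
      rw [hBdef]
      simp only
      rw [Real.rpow_neg hx', Real.sqrt_eq_rpow]
    rw [intervalIntegrable_iff_integrableOn_Ioo_of_le ht.le] at hBint ⊢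
    have hmeas : Measurable f' := by
      rw [hf'def]
      fun_prop
    refine Integrable.mono hBint hmeas.aestronglyMeasurable ?_
    rw [ae_restrict_iff' measurableSet_Ioo]
    refine ae_of_all _ fun u hu => ?_
    obtain ⟨hu0, hut⟩ := hu
    have hs0 : (0:ℝ) < Real.sqrt u := Real.sqrt_pos.2 hu0
    have hr0 : (0:ℝ) < Real.sqrt (t - u) := Real.sqrt_pos.2 (by linarith)
    have hsq : Real.sqrt u ^ 2 = u := Real.sq_sqrt hu0.le
    have hrq : Real.sqrt (t - u) ^ 2 = t - u := Real.sq_sqrt (by linarith)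
    set s := Real.sqrt u with hsdef
    set r := Real.sqrt (t - u) with hrdef
    have hsqrt1 : Real.sqrt (2 * π * u ^ 3) = Real.sqrt (2 * π) * s ^ 3 := by
      rw [Real.sqrt_mul h2π.le]
      congr 1
      rw [show u ^ 3 = (s ^ 3) ^ 2 by rw [← hsq]; ring]
      exact Real.sqrt_sq (by positivity)
    have hsqrt2 : Real.sqrt (2 * π * (t - u)) = Real.sqrt (2 * π) * r := by
      rw [Real.sqrt_mul h2π.le]
    have hA : Real.sqrt (2 * π) * Real.sqrt (2 * π) = 2 * π := Real.mul_self_sqrt h2π.le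
    have hst : s ≤ Real.sqrt t := by
      rw [hsdef]; exact Real.sqrt_le_sqrt (by linarith)
    have hfval : f' u = y * Real.exp (-(y ^ 2) / (2 * u)) * Real.exp (-(z ^ 2) / (2 * (t - u)))
        / (2 * π * (s ^ 3 * r)) := by
      rw [hf'def]
      simp only
      rw [hsqrt1, hsqrt2, ← hA]
      field_simp
      ring
      rw [Real.sqrt_sq (by positivity)]
    have hfpos : 0 ≤ f' u := by
      rw [hfval]; positivity
    have hBpos : 0 ≤ B u := by
      rw [hBdef]; positivity
    rw [Real.norm_eq_abs, Real.norm_eq_abs, abs_of_nonneg hfpos, abs_of_nonneg hBpos]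
    have hexp1 : Real.exp (-(y ^ 2) / (2 * u)) ≤ 16 * s ^ 4 / y ^ 4 := by
      have hc : 0 < y ^ 2 / (2 * u) := by positivity
      have h4 := sq_div_four_le_exp hc.le
      have h5 : Real.exp (-(y ^ 2) / (2 * u)) = (Real.exp (y ^ 2 / (2 * u)))⁻¹ := by
        rw [← Real.exp_neg]; ring_nf
      rw [h5]
      have h6 : ((y ^ 2 / (2 * u)) ^ 2 / 4)⁻¹ = 16 * u ^ 2 / y ^ 4 := by
        field_simp
        ring
      calc (Real.exp (y ^ 2 / (2 * u)))⁻¹ ≤ ((y ^ 2 / (2 * u)) ^ 2 / 4)⁻¹ := by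
            apply inv_anti₀ (by positivity) h4
        _ = 16 * u ^ 2 / y ^ 4 := h6
        _ = 16 * s ^ 4 / y ^ 4 := by rw [show s ^ 4 = (s ^ 2) ^ 2 by ring, hsq]
    have hexp2 : Real.exp (-(z ^ 2) / (2 * (t - u))) ≤ 1 := by
      apply Real.exp_le_one_iff.2
      apply div_nonpos_of_nonpos_of_nonneg
      · simp [sq_nonneg]
      · linarith
    calc f' u = y * Real.exp (-(y ^ 2) / (2 * u)) * Real.exp (-(z ^ 2) / (2 * (t - u)))
          / (2 * π * (s ^ 3 * r)) := hfval
      _ ≤ y * (16 * s ^ 4 / y ^ 4) * 1 / (2 * π * (s ^ 3 * r)) := by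
          gcongr
      _ = 16 * s / (y ^ 3 * (2 * π)) * r⁻¹ := by field_simp
      _ ≤ 16 * Real.sqrt t / (y ^ 3 * (2 * π)) * r⁻¹ := by gcongr
      _ = B u := by rw [hBdef]
  -- limit at 0
  have hlim0 : Tendsto H (𝓝[>] (0:ℝ))
      (𝓝 (P z * (-(Real.sqrt (2*π)/2)) + P (-z) * (-(Real.sqrt (2*π)/2)))) := by
    have hargbot : ∀ w : ℝ, Tendsto (fun u => arg w u) (𝓝[>] (0:ℝ)) atBot := by
      intro w
      have hsqrt0 : Tendsto (fun u : ℝ => Real.sqrt u) (𝓝[>] (0:ℝ)) (𝓝[>] 0) := by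
        rw [tendsto_nhdsWithin_iff]
        constructor
        · have := Real.continuous_sqrt.tendsto 0
          simpa using this.mono_left nhdsWithin_le_nhds
        · filter_upwards [self_mem_nhdsWithin] with u hu
          exact Real.sqrt_pos.2 hu
      have hinv : Tendsto (fun u : ℝ => (Real.sqrt u)⁻¹) (𝓝[>] (0:ℝ)) atTop :=
        hsqrt0.inv_tendsto_nhdsGT_zero
      have hnum : Tendsto (fun u : ℝ => y * Real.sqrt (t - u)) (𝓝[>] (0:ℝ))
          (𝓝 (y * Real.sqrt t)) := by
        apply Tendsto.mono_left _ nhdsWithin_le_nhds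
        have hc : Continuous fun u : ℝ => y * Real.sqrt (t - u) := by continuity
        simpa using hc.tendsto 0
      have hterm2 : Tendsto (fun u : ℝ => (y * Real.sqrt (t - u)) * (Real.sqrt u)⁻¹)
          (𝓝[>] (0:ℝ)) atTop := Tendsto.pos_mul_atTop (by positivity) hnum hinv
      have hterm1 : Tendsto (fun u : ℝ => w * Real.sqrt u / Real.sqrt (t - u))
          (𝓝[>] (0:ℝ)) (𝓝 0) := by
        apply Tendsto.mono_left _ nhdsWithin_le_nhds
        have h1 : Tendsto (fun u : ℝ => w * Real.sqrt u) (𝓝 0) (𝓝 0) := by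
          have hc : Continuous fun u : ℝ => w * Real.sqrt u := by continuity
          simpa using hc.tendsto 0
        have h2 : Tendsto (fun u : ℝ => Real.sqrt (t - u)) (𝓝 0) (𝓝 (Real.sqrt t)) := by
          have hc : Continuous fun u : ℝ => Real.sqrt (t - u) := by continuity
          simpa using hc.tendsto 0
        have := h1.div h2 hqt.ne'; rw [zero_div] at this; exact this
      have hsum : Tendsto (fun u : ℝ => w * Real.sqrt u / Real.sqrt (t - u)
          - y * Real.sqrt (t - u) / Real.sqrt u) (𝓝[>] (0:ℝ)) atBot := by
        have := hterm1.add_atBot (tendsto_neg_atTop_atBot.comp hterm2)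
        exact this.congr fun u => by simp [Function.comp]; ring
      rw [hargdef]
      exact hsum.atBot_div_const hqt
    rw [hHdef]
    exact ((myErf_atBot.comp (hargbot z)).const_mul (P z)).add
      ((myErf_atBot.comp (hargbot (-z))).const_mul (P (-z)))
  -- limit at t
  have hlimt : ∃ L, Tendsto H (𝓝[<] t) (𝓝 L) ∧
      L - (P z * (-(Real.sqrt (2*π)/2)) + P (-z) * (-(Real.sqrt (2*π)/2)))
        = Real.sqrt (2*π) * P z := by
    rcases eq_or_lt_of_le hz with rfl | hz0
    · -- z = 0
      refine ⟨0, ?_, ?_⟩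
      · have harg0 : Tendsto (fun u => arg 0 u) (𝓝[<] t) (𝓝 0) := by
          have heq : (fun u => arg 0 u) = fun u =>
              (0 - y * Real.sqrt (t - u) / Real.sqrt u) / Real.sqrt t := by
            rw [hargdef]; funext u; simp
          rw [heq]
          apply Tendsto.mono_left _ nhdsWithin_le_nhds
          have h1 : Tendsto (fun u : ℝ => y * Real.sqrt (t - u)) (𝓝 t) (𝓝 0) := by
            have hc : Continuous fun u : ℝ => y * Real.sqrt (t - u) := by continuity
            simpa using hc.tendsto t
          have h2 : Tendsto (fun u : ℝ => Real.sqrt u) (𝓝 t) (𝓝 (Real.sqrt t)) :=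
            Real.continuous_sqrt.tendsto t
          have := (h1.div h2 hqt.ne')
          have h3 := (tendsto_const_nhds (x := (0:ℝ)) (f := 𝓝 t)).sub this
          have h4 := h3.div_const (Real.sqrt t)
          simpa using h4
        have hmyErf0 : myErf 0 = 0 := intervalIntegral.integral_same
        rw [hHdef]
        have hcomp : Tendsto (fun v => myErf (arg 0 v)) (𝓝[<] t) (𝓝 0) := by
          have hErf0 : Tendsto myErf (𝓝 0) (𝓝 (0:ℝ)) := by
            have h := myErf_continuous.tendsto 0
            rwa [hmyErf0] at h
          exact hErf0.comp harg0
        have hH : Tendsto (fun v => P 0 * myErf (arg 0 v) + P (-0) * myErf (arg (-0) v))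
            (𝓝[<] t) (𝓝 (P 0 * 0 + P (-0) * 0)) := by
          simp only [neg_zero]
          exact (hcomp.const_mul _).add (hcomp.const_mul _)
        simpa using hH
      · simp only [neg_zero]
        ring
    · -- z > 0
      refine ⟨P z * (Real.sqrt (2*π)/2) + P (-z) * (-(Real.sqrt (2*π)/2)), ?_, by ring⟩
      have hsqrt0 : Tendsto (fun u : ℝ => Real.sqrt (t - u)) (𝓝[<] t) (𝓝[>] 0) := by
        rw [tendsto_nhdsWithin_iff]
        constructor
        · apply Tendsto.mono_left _ nhdsWithin_le_nhds
          have hc : Continuous fun u : ℝ => Real.sqrt (t - u) := by continuity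
          simpa using hc.tendsto t
        · filter_upwards [self_mem_nhdsWithin] with u hu
          exact Real.sqrt_pos.2 (sub_pos.2 hu)
      have hinv : Tendsto (fun u : ℝ => (Real.sqrt (t - u))⁻¹) (𝓝[<] t) atTop :=
        hsqrt0.inv_tendsto_nhdsGT_zero
      have ht2 : Tendsto (fun u : ℝ => y * Real.sqrt (t - u) / Real.sqrt u) (𝓝[<] t) (𝓝 0) := by
        apply Tendsto.mono_left _ nhdsWithin_le_nhds
        have h1 : Tendsto (fun u : ℝ => y * Real.sqrt (t - u)) (𝓝 t) (𝓝 0) := by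
          have hc : Continuous fun u : ℝ => y * Real.sqrt (t - u) := by continuity
          simpa using hc.tendsto t
        have h2 : Tendsto (fun u : ℝ => Real.sqrt u) (𝓝 t) (𝓝 (Real.sqrt t)) :=
          Real.continuous_sqrt.tendsto t
        have := h1.div h2 hqt.ne'; rw [zero_div] at this; exact this
      have hz1 : Tendsto (fun u : ℝ => z * Real.sqrt u) (𝓝[<] t) (𝓝 (z * Real.sqrt t)) := by
        apply Tendsto.mono_left _ nhdsWithin_le_nhds
        exact (continuous_const.mul Real.continuous_sqrt).tendsto t
      have htop : Tendsto (fun u : ℝ => (z * Real.sqrt u) * (Real.sqrt (t - u))⁻¹)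
          (𝓝[<] t) atTop := Tendsto.pos_mul_atTop (by positivity) hz1 hinv
      have hargz : Tendsto (fun u => arg z u) (𝓝[<] t) atTop := by
        rw [hargdef]
        apply Tendsto.atTop_div_const hqt
        exact ((ht2.neg.add_atTop htop).congr fun u => by ring)
      have hargmz : Tendsto (fun u => arg (-z) u) (𝓝[<] t) atBot := by
        rw [hargdef]
        apply Tendsto.atBot_div_const hqt
        have hneg : Tendsto (fun u : ℝ => -((z * Real.sqrt u) * (Real.sqrt (t - u))⁻¹))
            (𝓝[<] t) atBot := tendsto_neg_atTop_atBot.comp htop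
        exact ((ht2.neg.add_atBot hneg).congr fun u => by ring)
      rw [hHdef]
      exact ((myErf_atTop.comp hargz).const_mul (P z)).add
        ((myErf_atBot.comp hargmz).const_mul (P (-z)))
  obtain ⟨L, hL, hLval⟩ := hlimt
  rw [intervalIntegral.integral_eq_sub_of_hasDerivAt_of_tendsto ht hderiv hint hlim0 hL]
  rw [hLval, hPdef]
  rw [Real.sqrt_mul h2π.le t]
  rw [show (2:ℝ)*π = Real.sqrt (2*π) * Real.sqrt (2*π) from (Real.mul_self_sqrt h2π.le).symm]
  field_simp
  ring
  rw [Real.sqrt_sq (by positivity)]
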